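/- The map φ(X, ξ) := (φ^B(A, ξ_B), b_B + β, P_A⁻¹ T B, (P_B T B (Q_i⁻¹ ((P_B T)⁻¹ p_i)))), for X = (A, β, B, (Q_i)) ∈ G = SE₂(3) × ℝ⁶ × SE(3) × SOT(3)ⁿ and ξ = (ξ_B, b_B, T, (p_i)) in the VI-SLAM total space 𝒯, is a right group action of G on 𝒯: φ(X, ξ) ∈ 𝒯, φ(Id, ξ) = ξ, and φ(X₁X₂, ξ) = φ(X₂, φ(X₁, ξ)) for all X₁, X₂ ∈ G and ξ ∈ 𝒯. -/

import Mathlib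

noncomputable section
open Matrix

abbrev Mat3 := Matrix (Fin 3) (Fin 3) ℝ
abbrev Vec3 := EuclideanSpace ℝ (Fin 3)
abbrev Vec6 := EuclideanSpace ℝ (Fin 6)

/-- Membership in `SO(3)`. -/
def SO3 (R : Mat3) : Prop := Rᵀ * R = 1 ∧ R.det = 1

/-- The standard gravity direction `e₃ = (0,0,1)`. -/
def e3 : Vec3 := WithLp.toLp 2 (![0, 0, 1] : Fin 3 → ℝ)

/-- Matrix-vector multiplication on `ℝ³`. -/
def mulv (M : Mat3) (v : Vec3) : Vec3 := WithLp.toLp 2 (M.mulVec v)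

/-- `SE(3)` elements as (rotation, translation) pairs `(R_P, x_P)`. -/
abbrev SE3 := Mat3 × Vec3
def SE3.mul (P Q : SE3) : SE3 := (P.1 * Q.1, P.2 + mulv P.1 Q.2)
def SE3.one : SE3 := (1, 0)
def SE3.inv (P : SE3) : SE3 := (P.1ᵀ, -(mulv P.1ᵀ P.2))
/-- The action of `SE(3)` on `ℝ³`: `P p = R_P p + x_P`. -/
def SE3.act (P : SE3) (p : Vec3) : Vec3 := mulv P.1 p + P.2

/-- Membership in `SE_{e₃}(3) := {(R,x) ∈ SE(3) | R e₃ = e₃}`. -/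
def SEe3 (S : SE3) : Prop := SO3 S.1 ∧ mulv S.1 e3 = e3

/-- `SOT(3)` elements as pairs `(R_Q, c_Q)`. -/
abbrev SOT3 := Mat3 × ℝ
def SOT3.mem (Q : SOT3) : Prop := SO3 Q.1 ∧ 0 < Q.2
def SOT3.mul (Q₁ Q₂ : SOT3) : SOT3 := (Q₁.1 * Q₂.1, Q₁.2 * Q₂.2)
def SOT3.one : SOT3 := (1, 1)
def SOT3.inv (Q : SOT3) : SOT3 := (Q.1ᵀ, Q.2⁻¹)
/-- The action of `SOT(3)` on `ℝ³`: `Q p = c_Q R_Q p`. -/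
def SOT3.act (Q : SOT3) (p : Vec3) : Vec3 := Q.2 • mulv Q.1 p

/-- `SE₂(3)` elements as triples `(R_A, x_A, v_A)`. -/
abbrev SE23 := Mat3 × Vec3 × Vec3
def SE23.mem (A : SE23) : Prop := SO3 A.1
def SE23.mul (A₁ A₂ : SE23) : SE23 :=
  (A₁.1 * A₂.1, A₁.2.1 + mulv A₁.1 A₂.2.1, A₁.2.2 + mulv A₁.1 A₂.2.2)
def SE23.one : SE23 := (1, 0, 0)
/-- The pose component `P_A = (R_A, x_A)` of `A = (P_A, v_A) ∈ SE₂(3)`. -/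
def SE23.P (A : SE23) : SE3 := (A.1, A.2.1)

/-- A point of the ambient VI-SLAM state space with `n` landmarks. -/
structure VIState (n : ℕ) where
  P : SE3            -- pose of the IMU `(R_B, x_B)`
  v : Vec3           -- linear velocity `v_B`
  b : Vec6           -- IMU bias `b_B`
  T : SE3            -- camera extrinsics
  p : Fin n → Vec3   -- landmark positions

/-- Membership in the VI-SLAM total space `𝒯`. -/
def VIState.mem {n : ℕ} (ξ : VIState n) : Prop :=
  SO3 ξ.P.1 ∧ SO3 ξ.T.1 ∧ ∀ i, SE3.act (SE3.inv (SE3.mul ξ.P ξ.T)) (ξ.p i) ≠ 0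

/-- An element `X = (A, β, B, (Q_i))` of the group `G = SE₂(3) × ℝ⁶ × SE(3) × SOT(3)ⁿ`. -/
structure GElem (n : ℕ) where
  A : SE23
  β : Vec6
  B : SE3
  Q : Fin n → SOT3

def GElem.mem {n : ℕ} (X : GElem n) : Prop :=
  SE23.mem X.A ∧ SO3 X.B.1 ∧ ∀ i, SOT3.mem (X.Q i)

/-- Componentwise product on `G`. -/
def GElem.mul {n : ℕ} (X₁ X₂ : GElem n) : GElem n :=
  ⟨SE23.mul X₁.A X₂.A, X₁.β + X₂.β, SE3.mul X₁.B X₂.B, fun i => SOT3.mul (X₁.Q i) (X₂.Q i)⟩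

def GElem.one (n : ℕ) : GElem n := ⟨SE23.one, 0, SE3.one, fun _ => SOT3.one⟩

/-- The group action
`φ(X, ξ) := (φ^B(A, ξ_B), b_B + β, P_A⁻¹ T B, (P_B T B (Q_i⁻¹ ((P_B T)⁻¹ p_i))))`. -/
def phi {n : ℕ} (X : GElem n) (ξ : VIState n) : VIState n :=
  ⟨SE3.mul ξ.P (SE23.P X.A), ξ.v + mulv ξ.P.1 X.A.2.2, ξ.b + X.β,
   SE3.mul (SE3.mul (SE3.inv (SE23.P X.A)) ξ.T) X.B,
   fun i => SE3.act (SE3.mul (SE3.mul ξ.P ξ.T) X.B)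
     (SOT3.act (SOT3.inv (X.Q i)) (SE3.act (SE3.inv (SE3.mul ξ.P ξ.T)) (ξ.p i)))⟩

section Helpers

lemma mulv_mul (M N : Mat3) (v : Vec3) : mulv (M * N) v = mulv M (mulv N v) := by
  simp [mulv, Matrix.mulVec_mulVec]

lemma mulv_one (v : Vec3) : mulv 1 v = v := by
  simp [mulv]

lemma mulv_add (M : Mat3) (v w : Vec3) : mulv M (v + w) = mulv M v + mulv M w := by
  ext j
  simp [mulv, Matrix.mulVec, dotProduct, mul_add, Finset.sum_add_distrib]

lemma mulv_zero (M : Mat3) : mulv M (0 : Vec3) = 0 := by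
  ext j
  simp [mulv, Matrix.mulVec, dotProduct]

lemma mulv_neg (M : Mat3) (v : Vec3) : mulv M (-v) = -(mulv M v) := by
  ext j
  simp [mulv, Matrix.mulVec, dotProduct]

lemma mulv_smul (M : Mat3) (c : ℝ) (v : Vec3) : mulv M (c • v) = c • mulv M v := by
  ext j
  simp [mulv, Matrix.mulVec, dotProduct, Finset.mul_sum]
  congr 1; funext i; ring

lemma SO3.mul_self_transpose {R : Mat3} (h : SO3 R) : R * Rᵀ = 1 :=
  mul_eq_one_comm.mp h.1

lemma SO3.mul' {R S : Mat3} (hR : SO3 R) (hS : SO3 S) : SO3 (R * S) := by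
  constructor
  · rw [Matrix.transpose_mul, mul_assoc, ← mul_assoc Rᵀ R S, hR.1, one_mul, hS.1]
  · rw [Matrix.det_mul, hR.2, hS.2, mul_one]

lemma SO3.transpose {R : Mat3} (h : SO3 R) : SO3 Rᵀ := by
  refine ⟨?_, ?_⟩
  · rw [Matrix.transpose_transpose]; exact h.mul_self_transpose
  · rw [Matrix.det_transpose]; exact h.2

lemma SO3.mulv_eq_zero {R : Mat3} (h : SO3 R) {v : Vec3} (hv : mulv R v = 0) : v = 0 := by
  have : mulv Rᵀ (mulv R v) = v := by rw [← mulv_mul, h.1, mulv_one]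
  rw [hv, mulv_zero] at this
  exact this.symm

lemma se3_mul_assoc (P Q S : SE3) : SE3.mul (SE3.mul P Q) S = SE3.mul P (SE3.mul Q S) := by
  simp only [SE3.mul, mulv_mul, mulv_add, Prod.mk.injEq]
  exact ⟨mul_assoc _ _ _, add_assoc _ _ _⟩

lemma se3_mul_one (P : SE3) : SE3.mul P SE3.one = P := by
  simp only [SE3.mul, SE3.one, mulv_zero, add_zero, mul_one]

lemma se3_one_mul (P : SE3) : SE3.mul SE3.one P = P := by
  simp only [SE3.mul, SE3.one, mulv_one, one_mul, zero_add]

lemma se3_inv_one : SE3.inv SE3.one = SE3.one := by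
  simp only [SE3.inv, SE3.one, Matrix.transpose_one, mulv_zero, neg_zero]

lemma se3_mul_inv_self {P : SE3} (h : SO3 P.1) : SE3.mul P (SE3.inv P) = SE3.one := by
  simp only [SE3.mul, SE3.inv, SE3.one, Prod.mk.injEq, h.mul_self_transpose, mulv_neg,
    ← mulv_mul]
  exact ⟨trivial, by rw [mulv_one, add_neg_cancel]⟩

lemma se3_inv_mul_self {P : SE3} (h : SO3 P.1) : SE3.mul (SE3.inv P) P = SE3.one := by
  simp only [SE3.mul, SE3.inv, SE3.one, Prod.mk.injEq, h.1]
  exact ⟨trivial, by rw [neg_add_cancel]⟩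

lemma se3_inv_mul {P Q : SE3} (hP : SO3 P.1) :
    SE3.inv (SE3.mul P Q) = SE3.mul (SE3.inv Q) (SE3.inv P) := by
  simp only [SE3.inv, SE3.mul, Matrix.transpose_mul, Prod.mk.injEq, mulv_add, mulv_mul,
    mulv_neg]
  refine ⟨trivial, ?_⟩
  rw [← mulv_mul P.1ᵀ P.1, hP.1, mulv_one]
  abel

lemma se3_act_mul (P Q : SE3) (p : Vec3) :
    SE3.act (SE3.mul P Q) p = SE3.act P (SE3.act Q p) := by
  simp only [SE3.act, SE3.mul, mulv_mul, mulv_add]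
  abel

lemma se3_act_one (p : Vec3) : SE3.act SE3.one p = p := by
  simp only [SE3.act, SE3.one, mulv_one, add_zero]

lemma se3_act_inv_act {P : SE3} (h : SO3 P.1) (p : Vec3) :
    SE3.act P (SE3.act (SE3.inv P) p) = p := by
  rw [← se3_act_mul, se3_mul_inv_self h, se3_act_one]

lemma se3_inv_act_act {P : SE3} (h : SO3 P.1) (p : Vec3) :
    SE3.act (SE3.inv P) (SE3.act P p) = p := by
  rw [← se3_act_mul, se3_inv_mul_self h, se3_act_one]

lemma sot3_inv_act_ne_zero {Q : SOT3} (h : SOT3.mem Q) {p : Vec3} (hp : p ≠ 0) :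
    SOT3.act (SOT3.inv Q) p ≠ 0 := by
  intro hz
  apply hp
  simp only [SOT3.act, SOT3.inv] at hz
  have hc : (Q.2)⁻¹ ≠ 0 := inv_ne_zero h.2.ne'
  have h2 : mulv Q.1ᵀ p = 0 := by
    rcases smul_eq_zero.mp hz with h' | h'
    · exact absurd h' hc
    · exact h'
  exact h.1.transpose.mulv_eq_zero h2

lemma sot3_inv_mul_act (Q₁ Q₂ : SOT3) (p : Vec3) :
    SOT3.act (SOT3.inv (SOT3.mul Q₁ Q₂)) p
      = SOT3.act (SOT3.inv Q₂) (SOT3.act (SOT3.inv Q₁) p) := by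
  simp only [SOT3.act, SOT3.inv, SOT3.mul, Matrix.transpose_mul, mulv_mul, mulv_smul,
    mul_inv, smul_smul]
  rw [mul_comm]

lemma sot3_one_inv_act (p : Vec3) : SOT3.act (SOT3.inv SOT3.one) p = p := by
  simp only [SOT3.act, SOT3.inv, SOT3.one, Matrix.transpose_one, mulv_one, inv_one, one_smul]

lemma se23_P_mul (A₁ A₂ : SE23) :
    SE23.P (SE23.mul A₁ A₂) = SE3.mul (SE23.P A₁) (SE23.P A₂) := rfl

/-- The key pose-times-extrinsics identity: `(P P_A)(P_A⁻¹ T B) = (P T) B`. -/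
lemma phi_PT {n : ℕ} (X : GElem n) (ξ : VIState n) (hA : SO3 X.A.1) :
    SE3.mul (phi X ξ).P (phi X ξ).T = SE3.mul (SE3.mul ξ.P ξ.T) X.B := by
  show SE3.mul (SE3.mul ξ.P (SE23.P X.A))
      (SE3.mul (SE3.mul (SE3.inv (SE23.P X.A)) ξ.T) X.B)
      = SE3.mul (SE3.mul ξ.P ξ.T) X.B
  rw [← se3_mul_assoc, se3_mul_assoc ξ.P, ← se3_mul_assoc (SE23.P X.A),
    se3_mul_inv_self (P := SE23.P X.A) hA, se3_one_mul]

end Helpers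

/-- `φ` is a right group action of `G = SE₂(3) × ℝ⁶ × SE(3) × SOT(3)ⁿ`
on the VI-SLAM total space `𝒯`: it maps `𝒯` to `𝒯`, the identity acts trivially, and
`φ(X₁X₂, ξ) = φ(X₂, φ(X₁, ξ))`. -/
theorem phi_right_group_action (n : ℕ) (hn : 1 ≤ n) :
    (∀ (X : GElem n) (ξ : VIState n), X.mem → ξ.mem → (phi X ξ).mem) ∧
    (∀ ξ : VIState n, ξ.mem → phi (GElem.one n) ξ = ξ) ∧
    (∀ (X₁ X₂ : GElem n) (ξ : VIState n), X₁.mem → X₂.mem → ξ.mem →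
      phi (GElem.mul X₁ X₂) ξ = phi X₂ (phi X₁ ξ)) := by
  refine ⟨?_, ?_, ?_⟩
  · rintro X ξ ⟨hA, hB, hQ⟩ ⟨hP, hT, hp⟩
    have hA' : SO3 X.A.1 := hA
    have hPTB : SO3 (SE3.mul (SE3.mul ξ.P ξ.T) X.B).1 := (hP.mul' hT).mul' hB
    refine ⟨hP.mul' hA', (hA'.transpose.mul' hT).mul' hB, ?_⟩
    intro i
    rw [phi_PT X ξ hA']
    show SE3.act (SE3.inv (SE3.mul (SE3.mul ξ.P ξ.T) X.B))
        (SE3.act (SE3.mul (SE3.mul ξ.P ξ.T) X.B)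
          (SOT3.act (SOT3.inv (X.Q i)) (SE3.act (SE3.inv (SE3.mul ξ.P ξ.T)) (ξ.p i)))) ≠ 0
    rw [se3_inv_act_act hPTB]
    exact sot3_inv_act_ne_zero (hQ i) (hp i)
  · rintro ξ ⟨hP, hT, hp⟩
    have hPT : SO3 (SE3.mul ξ.P ξ.T).1 := hP.mul' hT
    obtain ⟨P, v, b, T, p⟩ := ξ
    simp only [phi, GElem.one, VIState.mk.injEq]
    refine ⟨se3_mul_one _, ?_, by simp, ?_, ?_⟩
    · show v + mulv P.1 (0 : Vec3) = v
      rw [mulv_zero, add_zero]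
    · show SE3.mul (SE3.mul (SE3.inv SE3.one) T) SE3.one = T
      rw [se3_mul_one, se3_inv_one, se3_one_mul]
    · funext i
      show SE3.act (SE3.mul (SE3.mul (P, v).1 T) SE3.one)
          (SOT3.act (SOT3.inv SOT3.one)
            (SE3.act (SE3.inv (SE3.mul (P, v).1 T)) (p i))) = p i
      rw [se3_mul_one, sot3_one_inv_act, se3_act_inv_act hPT]
  · rintro X₁ X₂ ξ ⟨hA₁, hB₁, hQ₁⟩ ⟨hA₂, hB₂, hQ₂⟩ ⟨hP, hT, hp⟩
    have hA₁' : SO3 X₁.A.1 := hA₁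
    have hC₁ : SO3 (SE3.mul (SE3.mul ξ.P ξ.T) X₁.B).1 := (hP.mul' hT).mul' hB₁
    have hPT1 := phi_PT X₁ ξ hA₁'
    simp only [phi, GElem.mul, VIState.mk.injEq]
    refine ⟨?_, ?_, ?_, ?_, ?_⟩
    · rw [se23_P_mul, ← se3_mul_assoc]
    · show ξ.v + mulv ξ.P.1 (X₁.A.2.2 + mulv X₁.A.1 X₂.A.2.2)
        = (ξ.v + mulv ξ.P.1 X₁.A.2.2) + mulv (ξ.P.1 * X₁.A.1) X₂.A.2.2
      rw [mulv_add, mulv_mul, add_assoc]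
    · exact (add_assoc _ _ _).symm
    · show SE3.mul (SE3.mul (SE3.inv (SE23.P (SE23.mul X₁.A X₂.A))) ξ.T) (SE3.mul X₁.B X₂.B)
        = SE3.mul (SE3.mul (SE3.inv (SE23.P X₂.A))
            (SE3.mul (SE3.mul (SE3.inv (SE23.P X₁.A)) ξ.T) X₁.B)) X₂.B
      rw [se23_P_mul, se3_inv_mul (P := SE23.P X₁.A) hA₁']
      simp only [se3_mul_assoc]
    · funext i
      show SE3.act (SE3.mul (SE3.mul ξ.P ξ.T) (SE3.mul X₁.B X₂.B))
          (SOT3.act (SOT3.inv (SOT3.mul (X₁.Q i) (X₂.Q i)))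
            (SE3.act (SE3.inv (SE3.mul ξ.P ξ.T)) (ξ.p i)))
        = SE3.act (SE3.mul (SE3.mul (phi X₁ ξ).P (phi X₁ ξ).T) X₂.B)
            (SOT3.act (SOT3.inv (X₂.Q i))
              (SE3.act (SE3.inv (SE3.mul (phi X₁ ξ).P (phi X₁ ξ).T)) ((phi X₁ ξ).p i)))
      rw [hPT1]
      have hpi : SE3.act (SE3.inv (SE3.mul (SE3.mul ξ.P ξ.T) X₁.B)) ((phi X₁ ξ).p i)
          = SOT3.act (SOT3.inv (X₁.Q i)) (SE3.act (SE3.inv (SE3.mul ξ.P ξ.T)) (ξ.p i)) := by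
        show SE3.act (SE3.inv (SE3.mul (SE3.mul ξ.P ξ.T) X₁.B))
            (SE3.act (SE3.mul (SE3.mul ξ.P ξ.T) X₁.B)
              (SOT3.act (SOT3.inv (X₁.Q i)) (SE3.act (SE3.inv (SE3.mul ξ.P ξ.T)) (ξ.p i)))) = _
        rw [se3_inv_act_act hC₁]
      rw [hpi, sot3_inv_mul_act, ← se3_mul_assoc]
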